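/- Let n ≥ 1 and γ ≥ 0, let μ, ρ : ℝⁿ → ℝ be continuous functions with μ(x) > 0 and ρ(x) > 0 for all x, let χ : ℝⁿ → ℝ be continuous with compact support, and let f : ℝ → ℝ be continuously differentiable on (0, ∞). Assume that x ↦ f(ρ(x)/μ(x))·μ(x) and x ↦ ρ(x)·log ρ(x) are Lebesgue-integrable on ℝⁿ. Then the function ε ↦ ∫_{ℝⁿ} f((ρ(x)+ε·χ(x))/μ(x))·μ(x) dx + γ·∫_{ℝⁿ} (ρ(x)+ε·χ(x))·log(ρ(x)+ε·χ(x)) dx has derivative at ε = 0 equal to ∫_{ℝⁿ} [ f'(ρ(x)/μ(x)) + γ·log ρ(x) + γ ]·χ(x) dx. -/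

import Mathlib

open MeasureTheory Real

/-- First variation of the entropy-regularized f-divergence functional
`F(ρ) = ∫ f(ρ/μ) μ + γ ∫ ρ log ρ` in direction `χ`:
the derivative at `ε = 0` equals `∫ (f'(ρ/μ) + γ log ρ + γ) χ`. -/
theorem first_variation_entropy_regularized_f_divergence (n : ℕ) (hn : 1 ≤ n)
    (γ : ℝ) (hγ : 0 ≤ γ)
    (μ ρ χ : (Fin n → ℝ) → ℝ) (f : ℝ → ℝ)
    (hμc : Continuous μ) (hρc : Continuous ρ)
    (hμpos : ∀ x, 0 < μ x) (hρpos : ∀ x, 0 < ρ x)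
    (hχc : Continuous χ) (hχsupp : HasCompactSupport χ)
    (hf : ContDiffOn ℝ 1 f (Set.Ioi (0 : ℝ)))
    (hint1 : Integrable (fun x => f (ρ x / μ x) * μ x) volume)
    (hint2 : Integrable (fun x => ρ x * Real.log (ρ x)) volume) :
    HasDerivAt
      (fun ε : ℝ =>
        (∫ x, f ((ρ x + ε * χ x) / μ x) * μ x) +
          γ * ∫ x, (ρ x + ε * χ x) * Real.log (ρ x + ε * χ x))
      (∫ x, (deriv f (ρ x / μ x) + γ * Real.log (ρ x) + γ) * χ x) 0 := by
  classical
  set K := tsupport χ with hKdef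
  have hKc : IsCompact K := hχsupp
  by_cases hK : K.Nonempty
  swap
  · -- χ is identically zero
    have hχ0 : ∀ x, χ x = 0 := by
      intro x
      have : K = ∅ := Set.not_nonempty_iff_eq_empty.mp hK
      by_contra h
      exact (this ▸ subset_tsupport χ (by simpa [Function.support] using h) : (x : (Fin n → ℝ)) ∈ (∅ : Set (Fin n → ℝ)))
    simp only [hχ0, mul_zero, add_zero]
    simp only [zero_mul, integral_zero]
    exact hasDerivAt_const _ _
  -- extrema of ρ, μ on K and bound on χ
  obtain ⟨xδ, hxδK, hxδ⟩ := hKc.exists_isMinOn hK hρc.continuousOn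
  obtain ⟨xR, hxRK, hxR⟩ := hKc.exists_isMaxOn hK hρc.continuousOn
  obtain ⟨xm, hxmK, hxm⟩ := hKc.exists_isMinOn hK hμc.continuousOn
  obtain ⟨xM, hxMK, hxM⟩ := hKc.exists_isMaxOn hK hμc.continuousOn
  obtain ⟨Mχ, hMχ⟩ := hχsupp.exists_bound_of_continuous hχc
  set δ : ℝ := ρ xδ with hδdef
  set R : ℝ := ρ xR with hRdef
  set m : ℝ := μ xm with hmdef
  set Mμ : ℝ := μ xM with hMμdef
  have hδpos : 0 < δ := hρpos _
  have hmpos : 0 < m := hμpos _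
  have hMμpos : 0 < Mμ := hμpos _
  have hMχ0 : 0 ≤ Mχ := le_trans (norm_nonneg _) (hMχ xδ)
  have hδle : ∀ x ∈ K, δ ≤ ρ x := fun x hx => hxδ hx
  have hRle : ∀ x ∈ K, ρ x ≤ R := fun x hx => hxR hx
  have hmle : ∀ x ∈ K, m ≤ μ x := fun x hx => hxm hx
  have hMμle : ∀ x ∈ K, μ x ≤ Mμ := fun x hx => hxM hx
  set ε₀ : ℝ := δ / (2 * (Mχ + 1)) with hε₀def
  have hε₀pos : 0 < ε₀ := by positivity
  have hε₀Mχ : ε₀ * Mχ ≤ δ / 2 := by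
    rw [hε₀def]
    rw [div_mul_eq_mul_div, div_le_div_iff₀ (by positivity) (by norm_num)]
    nlinarith
  -- key bounds for |ε| < ε₀
  have habs : ∀ ε : ℝ, |ε| < ε₀ → ∀ x, |ε * χ x| ≤ δ / 2 := by
    intro ε hε x
    rw [abs_mul]
    calc |ε| * |χ x| ≤ ε₀ * Mχ := by
          apply mul_le_mul hε.le (by simpa using hMχ x) (abs_nonneg _) hε₀pos.le
      _ ≤ δ / 2 := hε₀Mχ
  have hlo : ∀ ε : ℝ, |ε| < ε₀ → ∀ x ∈ K, δ / 2 ≤ ρ x + ε * χ x := by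
    intro ε hε x hx
    have h1 := habs ε hε x
    have h2 := hδle x hx
    have := abs_le.mp h1
    linarith [this.1]
  have hhi : ∀ ε : ℝ, |ε| < ε₀ → ∀ x ∈ K, ρ x + ε * χ x ≤ R + δ / 2 := by
    intro ε hε x hx
    have h1 := habs ε hε x
    have h2 := hRle x hx
    have := abs_le.mp h1
    linarith [this.2]
  have hpos : ∀ ε : ℝ, |ε| < ε₀ → ∀ x, 0 < ρ x + ε * χ x := by
    intro ε hε x
    by_cases hx : x ∈ K
    · linarith [hlo ε hε x hx]
    · have : χ x = 0 := image_eq_zero_of_notMem_tsupport hx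
      simpa [this] using hρpos x
  -- range of the argument of f
  set a : ℝ := (δ / 2) / Mμ with hadef
  set b : ℝ := (R + δ / 2) / m with hbdef
  have hapos : 0 < a := by positivity
  have hmem : ∀ ε : ℝ, |ε| < ε₀ → ∀ x ∈ K, (ρ x + ε * χ x) / μ x ∈ Set.Icc a b := by
    intro ε hε x hx
    have hRpos : 0 < R := lt_of_lt_of_le hδpos (hδle xR hxRK)
    constructor
    · rw [hadef]
      exact div_le_div₀ (hpos ε hε x).le (hlo ε hε x hx) (hμpos x) (hMμle x hx)
    · rw [hbdef]
      exact div_le_div₀ (by linarith) (hhi ε hε x hx) hmpos (hmle x hx)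
  -- bounds on deriv f and log on the relevant compact sets
  have hderivf_cont : ContinuousOn (deriv f) (Set.Ioi (0 : ℝ)) :=
    hf.continuousOn_deriv_of_isOpen isOpen_Ioi le_rfl
  obtain ⟨C₁, hC₁⟩ := (isCompact_Icc (a := a) (b := b)).exists_bound_of_continuousOn
    (hderivf_cont.mono (fun t ht => lt_of_lt_of_le hapos ht.1))
  obtain ⟨C₂, hC₂⟩ := (isCompact_Icc (a := δ / 2) (b := R + δ / 2)).exists_bound_of_continuousOn
    (Real.continuousOn_log.mono (fun t ht => by
      have : (0 : ℝ) < t := lt_of_lt_of_le (by positivity) ht.1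
      simp [this.ne']))
  -- measurability of K and integrability of indicator bounds
  have hKmeas : MeasurableSet K := (isClosed_tsupport χ).measurableSet
  have hIndInt : ∀ c : ℝ, Integrable (K.indicator (fun _ => c)) volume := by
    intro c
    rw [integrable_indicator_iff hKmeas]
    exact integrableOn_const hKc.measure_lt_top.ne
  -- differentiability of f at positive points
  have hfd : ∀ t : ℝ, 0 < t → HasDerivAt f (deriv f t) t := by
    intro t ht
    exact (((hf.differentiableOn one_ne_zero).differentiableAt
      (isOpen_Ioi.mem_nhds ht)).hasDerivAt)
  -- sets up the two parametric integrals
  set F₁ : ℝ → (Fin n → ℝ) → ℝ :=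
    fun ε x => f ((ρ x + ε * χ x) / μ x) * μ x - f (ρ x / μ x) * μ x with hF₁def
  set F₁' : ℝ → (Fin n → ℝ) → ℝ :=
    fun ε x => deriv f ((ρ x + ε * χ x) / μ x) * χ x with hF₁'def
  set F₂ : ℝ → (Fin n → ℝ) → ℝ :=
    fun ε x => (ρ x + ε * χ x) * Real.log (ρ x + ε * χ x) - ρ x * Real.log (ρ x) with hF₂def
  set F₂' : ℝ → (Fin n → ℝ) → ℝ :=
    fun ε x => (Real.log (ρ x + ε * χ x) + 1) * χ x with hF₂'def
  -- continuity facts for each |ε| < ε₀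
  have hinner_cont : ∀ ε : ℝ, Continuous (fun x => (ρ x + ε * χ x) / μ x) := by
    intro ε
    exact (hρc.add (continuous_const.mul hχc)).div hμc (fun x => (hμpos x).ne')
  have hcont1 : ∀ ε : ℝ, |ε| < ε₀ →
      Continuous (fun x => f ((ρ x + ε * χ x) / μ x) * μ x) := by
    intro ε hε
    refine ((hf.continuousOn.comp_continuous (hinner_cont ε)
      (fun x => ?_)).mul hμc)
    exact Set.mem_Ioi.mpr (div_pos (hpos ε hε x) (hμpos x))
  have hcont2 : ∀ ε : ℝ, |ε| < ε₀ →
      Continuous (fun x => (ρ x + ε * χ x) * Real.log (ρ x + ε * χ x)) := by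
    intro ε hε
    have hg : Continuous (fun x => ρ x + ε * χ x) := hρc.add (continuous_const.mul hχc)
    exact hg.mul (Real.continuousOn_log.comp_continuous hg (fun x => by
      simp [(hpos ε hε x).ne']))
  have h0ε : |(0 : ℝ)| < ε₀ := by simpa using hε₀pos
  -- compact support of the differences
  have hsupp1 : ∀ ε : ℝ, HasCompactSupport (F₁ ε) := by
    intro ε
    apply HasCompactSupport.intro hKc
    intro x hx
    have : χ x = 0 := image_eq_zero_of_notMem_tsupport hx
    simp [hF₁def, this]
  have hsupp2 : ∀ ε : ℝ, HasCompactSupport (F₂ ε) := by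
    intro ε
    apply HasCompactSupport.intro hKc
    intro x hx
    have : χ x = 0 := image_eq_zero_of_notMem_tsupport hx
    simp [hF₂def, this]
  have hF₁int : ∀ ε : ℝ, |ε| < ε₀ → Integrable (F₁ ε) volume := by
    intro ε hε
    exact ((hcont1 ε hε).sub (hcont1 0 h0ε |>.comp continuous_id |>.congr (by
      intro x; simp))).integrable_of_hasCompactSupport (hsupp1 ε)
  have hF₂int : ∀ ε : ℝ, |ε| < ε₀ → Integrable (F₂ ε) volume := by
    intro ε hε
    exact ((hcont2 ε hε).sub (hcont2 0 h0ε |>.congr (by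
      intro x; simp))).integrable_of_hasCompactSupport (hsupp2 ε)
  -- first parametric integral
  have key1 : Integrable (F₁' 0) volume ∧
      HasDerivAt (fun ε => ∫ x, F₁ ε x) (∫ x, F₁' 0 x) 0 := by
    apply hasDerivAt_integral_of_dominated_loc_of_deriv_le (Metric.ball_mem_nhds (0 : ℝ) hε₀pos)
      (bound := K.indicator (fun _ => C₁ * Mχ))
    · filter_upwards [Metric.ball_mem_nhds (0 : ℝ) hε₀pos] with ε hε
      rw [Metric.mem_ball, Real.dist_eq, sub_zero] at hε
      exact (hF₁int ε hε).aestronglyMeasurable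
    · simpa [hF₁def] using (integrable_zero _ _ (volume : Measure (Fin n → ℝ)))
    · apply Continuous.aestronglyMeasurable
      exact (hderivf_cont.comp_continuous (hinner_cont 0)
        (fun x => Set.mem_Ioi.mpr (div_pos (hpos 0 h0ε x) (hμpos x)))).mul hχc
    · apply Filter.Eventually.of_forall
      intro x ε hε
      rw [Metric.mem_ball, Real.dist_eq, sub_zero] at hε
      by_cases hx : x ∈ K
      · rw [Set.indicator_of_mem hx, hF₁'def]
        calc ‖deriv f ((ρ x + ε * χ x) / μ x) * χ x‖
            = ‖deriv f ((ρ x + ε * χ x) / μ x)‖ * ‖χ x‖ := norm_mul _ _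
          _ ≤ C₁ * Mχ := mul_le_mul (hC₁ _ (hmem ε hε x hx)) (hMχ x) (norm_nonneg _)
              (le_trans (norm_nonneg _) (hC₁ _ (hmem ε hε x hx)))
      · rw [Set.indicator_of_notMem hx]
        have : χ x = 0 := image_eq_zero_of_notMem_tsupport hx
        simp [hF₁'def, this]
    · exact hIndInt _
    · apply Filter.Eventually.of_forall
      intro x ε hε
      rw [Metric.mem_ball, Real.dist_eq, sub_zero] at hε
      have hginner : HasDerivAt (fun ε : ℝ => (ρ x + ε * χ x) / μ x) (χ x / μ x) ε := by
        have : HasDerivAt (fun ε : ℝ => ρ x + ε * χ x) (χ x) ε := by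
          simpa using ((hasDerivAt_id ε).mul_const (χ x)).const_add (ρ x)
        exact this.div_const (μ x)
      have hfc : HasDerivAt f (deriv f ((ρ x + ε * χ x) / μ x)) ((ρ x + ε * χ x) / μ x) :=
        hfd _ (div_pos (hpos ε hε x) (hμpos x))
      have := (hfc.comp ε hginner).mul_const (μ x)
      have h2 : deriv f ((ρ x + ε * χ x) / μ x) * (χ x / μ x) * μ x = F₁' ε x := by
        rw [hF₁'def]
        field_simp
        rw [mul_right_comm, mul_div_cancel_right₀ _ (hμpos x).ne']
      rw [h2] at this
      simpa [hF₁def] using this.sub_const (f (ρ x / μ x) * μ x)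
  -- second parametric integral
  have key2 : Integrable (F₂' 0) volume ∧
      HasDerivAt (fun ε => ∫ x, F₂ ε x) (∫ x, F₂' 0 x) 0 := by
    apply hasDerivAt_integral_of_dominated_loc_of_deriv_le (Metric.ball_mem_nhds (0 : ℝ) hε₀pos)
      (bound := K.indicator (fun _ => (C₂ + 1) * Mχ))
    · filter_upwards [Metric.ball_mem_nhds (0 : ℝ) hε₀pos] with ε hε
      rw [Metric.mem_ball, Real.dist_eq, sub_zero] at hε
      exact (hF₂int ε hε).aestronglyMeasurable
    · simpa [hF₂def] using (integrable_zero _ _ (volume : Measure (Fin n → ℝ)))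
    · apply Continuous.aestronglyMeasurable
      have hg : Continuous (fun x => ρ x + (0:ℝ) * χ x) := hρc.add (continuous_const.mul hχc)
      exact ((Real.continuousOn_log.comp_continuous hg (fun x => by
        simp [(hρpos x).ne'])).add continuous_const).mul hχc
    · apply Filter.Eventually.of_forall
      intro x ε hε
      rw [Metric.mem_ball, Real.dist_eq, sub_zero] at hε
      by_cases hx : x ∈ K
      · rw [Set.indicator_of_mem hx, hF₂'def]
        have hmem2 : ρ x + ε * χ x ∈ Set.Icc (δ / 2) (R + δ / 2) :=
          ⟨hlo ε hε x hx, hhi ε hε x hx⟩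
        calc ‖(Real.log (ρ x + ε * χ x) + 1) * χ x‖
            = ‖Real.log (ρ x + ε * χ x) + 1‖ * ‖χ x‖ := norm_mul _ _
          _ ≤ (C₂ + 1) * Mχ := by
              apply mul_le_mul _ (hMχ x) (norm_nonneg _)
              · have := le_trans (norm_nonneg _) (hC₂ _ hmem2)
                linarith
              · calc ‖Real.log (ρ x + ε * χ x) + 1‖
                    ≤ ‖Real.log (ρ x + ε * χ x)‖ + ‖(1:ℝ)‖ := norm_add_le _ _
                  _ ≤ C₂ + 1 := by
                      have := hC₂ _ hmem2
                      simp only [norm_one]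
                      linarith
      · rw [Set.indicator_of_notMem hx]
        have : χ x = 0 := image_eq_zero_of_notMem_tsupport hx
        simp [hF₂'def, this]
    · exact hIndInt _
    · apply Filter.Eventually.of_forall
      intro x ε hε
      rw [Metric.mem_ball, Real.dist_eq, sub_zero] at hε
      have hg : HasDerivAt (fun ε : ℝ => ρ x + ε * χ x) (χ x) ε := by
        simpa using ((hasDerivAt_id ε).mul_const (χ x)).const_add (ρ x)
      have hml : HasDerivAt (fun t => t * Real.log t)
          (Real.log (ρ x + ε * χ x) + 1) (ρ x + ε * χ x) :=
        Real.hasDerivAt_mul_log (hpos ε hε x).ne'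
      have := hml.comp ε hg
      simpa [hF₂def, hF₂'def, Function.comp, mul_comm] using
        this.sub_const (ρ x * Real.log (ρ x))
  obtain ⟨hInt₁, hHD₁⟩ := key1
  obtain ⟨hInt₂, hHD₂⟩ := key2
  -- the combined auxiliary function
  set c₁ : ℝ := ∫ x, f (ρ x / μ x) * μ x with hc₁def
  set c₂ : ℝ := ∫ x, ρ x * Real.log (ρ x) with hc₂def
  have hG : HasDerivAt (fun ε => (c₁ + ∫ x, F₁ ε x) + γ * (c₂ + ∫ x, F₂ ε x))
      ((∫ x, F₁' 0 x) + γ * (∫ x, F₂' 0 x)) 0 := by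
    exact (hHD₁.const_add c₁).add ((hHD₂.const_add c₂).const_mul γ)
  -- the target function eventually equals the auxiliary function
  have hev : (fun ε : ℝ =>
        (∫ x, f ((ρ x + ε * χ x) / μ x) * μ x) +
          γ * ∫ x, (ρ x + ε * χ x) * Real.log (ρ x + ε * χ x))
      =ᶠ[nhds (0:ℝ)] (fun ε => (c₁ + ∫ x, F₁ ε x) + γ * (c₂ + ∫ x, F₂ ε x)) := by
    filter_upwards [Metric.ball_mem_nhds (0 : ℝ) hε₀pos] with ε hε
    rw [Metric.mem_ball, Real.dist_eq, sub_zero] at hε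
    have e1 : (∫ x, f ((ρ x + ε * χ x) / μ x) * μ x) = c₁ + ∫ x, F₁ ε x := by
      rw [hc₁def, ← integral_add hint1 (hF₁int ε hε)]
      congr 1
      ext x
      simp [hF₁def]
    have e2 : (∫ x, (ρ x + ε * χ x) * Real.log (ρ x + ε * χ x)) = c₂ + ∫ x, F₂ ε x := by
      rw [hc₂def, ← integral_add hint2 (hF₂int ε hε)]
      congr 1
      ext x
      simp [hF₂def]
    rw [e1, e2]
  have hmain := hG.congr_of_eventuallyEq hev
  -- identify the derivative value
  have hInt₁' : Integrable (fun x => deriv f (ρ x / μ x) * χ x) volume := by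
    have : F₁' 0 = fun x => deriv f (ρ x / μ x) * χ x := by
      ext x; simp [hF₁'def]
    rwa [this] at hInt₁
  have hInt₂' : Integrable (fun x => (Real.log (ρ x) + 1) * χ x) volume := by
    have : F₂' 0 = fun x => (Real.log (ρ x) + 1) * χ x := by
      ext x; simp [hF₂'def]
    rwa [this] at hInt₂
  have hval : (∫ x, F₁' 0 x) + γ * (∫ x, F₂' 0 x)
      = ∫ x, (deriv f (ρ x / μ x) + γ * Real.log (ρ x) + γ) * χ x := by
    have e1 : (∫ x, F₁' 0 x) = ∫ x, deriv f (ρ x / μ x) * χ x := by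
      congr 1; ext x; simp [hF₁'def]
    have e2 : (∫ x, F₂' 0 x) = ∫ x, (Real.log (ρ x) + 1) * χ x := by
      congr 1; ext x; simp [hF₂'def]
    rw [e1, e2, ← integral_const_mul, ← integral_add hInt₁' (hInt₂'.const_mul γ)]
    congr 1
    ext x
    ring
  rw [hval] at hmain
  exact hmain
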